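/- arXiv:2212.10871 — 2 statements merged into one kernel-verified Lean document; each statement's English description precedes it below -/
import Mathlib

section
/- Let (p_k^{(1)}) and (p_k^{(2)}) be critical offspring distributions with pgfs Φ_1, Φ_2 satisfying Φ_1(t) ≤ Φ_2(t) for all t ∈ (0,1). Let r ≥ 2 be an integer and suppose that ∑_k k^j p_k^{(1)} = ∑_k k^j p_k^{(2)} < ∞ for j = 1, …, r−1. Then, with moments taken in [0,∞]: if r is even, ∑_k k^r p_k^{(1)} ≤ ∑_k k^r p_k^{(2)}; if r is odd, ∑_k k^r p_k^{(2)} ≤ ∑_k k^r p_k^{(1)}. In particular (case r = 2), Φ_1 ≤ Φ_2 on (0,1) implies σ_1² ≤ σ_2², where σ_i² = ∑_k k(k−1) p_k^{(i)}. -/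
open Finset

noncomputable def Rem (r : ℕ) (x : ℝ) : ℝ :=
  Real.exp (-x) - ∑ j ∈ Finset.range r, (-x) ^ j / j.factorial

lemma hasDerivAt_expneg (x : ℝ) :
    HasDerivAt (fun y : ℝ => Real.exp (-y)) (-Real.exp (-x)) x := by
  simpa using (hasDerivAt_neg x).exp

lemma hasDerivAt_Rem (r : ℕ) (x : ℝ) : HasDerivAt (Rem (r + 1)) (-(Rem r x)) x := by
  have hterm : ∀ j : ℕ, HasDerivAt (fun y : ℝ => (-y) ^ j / j.factorial)
      ((j * (-x) ^ (j - 1) * (-1)) / j.factorial) x := by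
    intro j
    exact ((hasDerivAt_pow j (-x)).comp x (hasDerivAt_neg x)).div_const _
  have hsum : HasDerivAt (fun y : ℝ => ∑ j ∈ range (r + 1), (-y) ^ j / j.factorial)
      (∑ j ∈ range (r + 1), (j * (-x) ^ (j - 1) * (-1)) / j.factorial) x :=
    HasDerivAt.fun_sum fun j _ => hterm j
  have hD : (∑ j ∈ range (r + 1), ((j : ℝ) * (-x) ^ (j - 1) * (-1)) / j.factorial)
      = -∑ j ∈ range r, (-x) ^ j / j.factorial := by
    rw [Finset.sum_range_succ']
    simp only [Nat.cast_zero, zero_mul]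
    rw [← Finset.sum_neg_distrib]
    simp only [zero_mul, zero_div, add_zero]
    refine Finset.sum_congr rfl fun j _ => ?_
    have h1 : ((j + 1).factorial : ℝ) = (j + 1) * j.factorial := by
      push_cast [Nat.factorial_succ]; ring
    have h2 : ((j : ℝ) + 1) ≠ 0 := by positivity
    have h3 : (j.factorial : ℝ) ≠ 0 := by positivity
    field_simp [h1]
    simp only [add_comm 1 j, Nat.add_sub_cancel]
    push_cast [Nat.factorial_succ]
    ring
  have := (hasDerivAt_expneg x).sub hsum
  rw [hD] at this
  refine this.congr_deriv ?_
  simp only [Rem, sub_neg_eq_add]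
  ring

lemma Rem_zero (r : ℕ) : Rem (r + 1) 0 = 0 := by
  simp only [Rem, neg_zero, Real.exp_zero]
  rw [Finset.sum_range_succ']
  simp [pow_succ]

lemma nonneg_of_deriv (f f' : ℝ → ℝ) (hd : ∀ x, HasDerivAt f (f' x) x)
    (h0 : f 0 = 0) (h' : ∀ x, 0 ≤ x → 0 ≤ f' x) : ∀ x, 0 ≤ x → 0 ≤ f x := by
  intro x hx
  have hmono : MonotoneOn f (Set.Ici 0) := by
    apply monotoneOn_of_deriv_nonneg (convex_Ici 0)
    · exact fun y _ => (hd y).differentiableAt.continuousAt.continuousWithinAt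
    · exact fun y _ => (hd y).differentiableAt.differentiableWithinAt
    · intro y hy
      rw [interior_Ici] at hy
      rw [(hd y).deriv]
      exact h' y hy.le
  have := hmono Set.self_mem_Ici hx hx
  linarith

lemma Rem_bounds (r : ℕ) : ∀ x : ℝ, 0 ≤ x →
    x ^ r * Real.exp (-x) / r.factorial ≤ (-1) ^ r * Rem r x ∧
    (-1) ^ r * Rem r x ≤ x ^ r / r.factorial := by
  induction r with
  | zero =>
    intro x hx
    constructor
    · simp [Rem]
    · simpa [Rem] using (Real.exp_le_one_iff (x := -x)).mpr (by linarith)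
  | succ r ih =>
    have hfac : ((r + 1).factorial : ℝ) = (r + 1) * r.factorial := by
      push_cast [Nat.factorial_succ]; ring
    have hfr : (0:ℝ) < r.factorial := by positivity
    have hfr1 : (0:ℝ) < ((r+1).factorial : ℝ) := by positivity
    -- upper bound
    have hupper : ∀ x : ℝ, 0 ≤ x →
        0 ≤ x ^ (r+1) / (r+1).factorial - (-1) ^ (r+1) * Rem (r+1) x := by
      apply nonneg_of_deriv _
        (fun x => ((r+1 : ℕ) * x ^ r) / (r+1).factorial - (-1) ^ (r+1) * (-(Rem r x)))
      · intro x
        exact ((hasDerivAt_pow (r+1) x).div_const _).sub ((hasDerivAt_Rem r x).const_mul _)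
      · simp [Rem_zero]
      · intro x hx
        have h1 := (ih x hx).1
        have h2 := (ih x hx).2
        have e1 : (-1:ℝ) ^ (r+1) * (-(Rem r x)) = (-1) ^ r * Rem r x := by
          rw [pow_succ]; ring
        have e2 : ((r+1 : ℕ) : ℝ) * x ^ r / (r+1).factorial = x ^ r / r.factorial := by
          rw [hfac]
          push_cast
          rw [div_eq_div_iff (by positivity) hfr.ne']
          ring
        rw [e1, e2]
        linarith
    -- lower bound
    have hlower : ∀ x : ℝ, 0 ≤ x →
        0 ≤ (-1) ^ (r+1) * Rem (r+1) x - x ^ (r+1) * Real.exp (-x) / (r+1).factorial := by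
      apply nonneg_of_deriv _
        (fun x => (-1) ^ (r+1) * (-(Rem r x)) -
          ((r+1 : ℕ) * x ^ r * Real.exp (-x) + x ^ (r+1) * (-Real.exp (-x))) / (r+1).factorial)
      · intro x
        exact ((hasDerivAt_Rem r x).const_mul _).sub
          (((hasDerivAt_pow (r+1) x).mul (hasDerivAt_expneg x)).div_const _)
      · simp [Rem_zero]
      · intro x hx
        have h1 := (ih x hx).1
        have e1 : (-1:ℝ) ^ (r+1) * (-(Rem r x)) = (-1) ^ r * Rem r x := by
          rw [pow_succ]; ring
        rw [e1]
        have hexp : (0:ℝ) < Real.exp (-x) := Real.exp_pos _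
        have e2 : ((r+1 : ℕ) * x ^ r * Real.exp (-x) + x ^ (r+1) * (-Real.exp (-x))) / (r+1).factorial
            ≤ x ^ r * Real.exp (-x) / r.factorial := by
          rw [div_le_div_iff₀ hfr1 hfr, hfac]
          push_cast
          have hx1 : 0 ≤ x ^ (r+1) * Real.exp (-x) * r.factorial := by positivity
          nlinarith [hx1]
        linarith
    intro x hx
    constructor
    · linarith [hlower x hx]
    · linarith [hupper x hx]

lemma Rem_sign (r : ℕ) (x : ℝ) (hx : 0 ≤ x) : 0 ≤ (-1) ^ r * Rem r x := by
  have h := (Rem_bounds r x hx).1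
  have : (0:ℝ) ≤ x ^ r * Real.exp (-x) / r.factorial := by positivity
  linarith

lemma summable_of_ofReal_tsum_ne_top {a : ℕ → ℝ} (ha : ∀ k, 0 ≤ a k)
    (h : (∑' k, ENNReal.ofReal (a k)) ≠ ⊤) : Summable a :=
  (ENNReal.summable_toReal h).congr fun k => ENNReal.toReal_ofReal (ha k)

lemma T_eq (p : ℕ → ℝ) (hp : ∀ k, 0 ≤ p k) (r : ℕ) (hr : 0 < r)
    (hS : ∀ j < r, Summable fun k : ℕ => (k : ℝ) ^ j * p k) (s : ℝ) (hs : 0 ≤ s) :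
    (∑' k, ENNReal.ofReal (p k * ((-1) ^ r * Rem r ((k : ℝ) * s)))) =
    ENNReal.ofReal ((-1) ^ r * ((∑' k, p k * Real.exp (-((k : ℝ) * s))) -
      ∑ j ∈ Finset.range r, (-s) ^ j / j.factorial * ∑' k : ℕ, (k : ℝ) ^ j * p k)) := by
  have hp0 : Summable p := by simpa using hS 0 hr
  have hexp : Summable fun k : ℕ => p k * Real.exp (-((k : ℝ) * s)) := by
    refine Summable.of_nonneg_of_le (fun k => mul_nonneg (hp k) (Real.exp_nonneg _)) (fun k => ?_) hp0
    exact mul_le_of_le_one_right (hp k)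
      ((Real.exp_le_one_iff (x := -((k:ℝ)*s))).mpr (neg_nonpos.mpr (by positivity)))
  have hpoly : Summable fun k : ℕ => ∑ j ∈ Finset.range r, (-s) ^ j / j.factorial * ((k : ℝ) ^ j * p k) :=
    summable_sum fun j hj => (hS j (Finset.mem_range.mp hj)).mul_left _
  have key : ∀ k : ℕ, p k * Rem r ((k : ℝ) * s) =
      p k * Real.exp (-((k : ℝ) * s)) -
        ∑ j ∈ Finset.range r, (-s) ^ j / j.factorial * ((k : ℝ) ^ j * p k) := by
    intro k
    unfold Rem
    rw [mul_sub, Finset.mul_sum]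
    congr 1
    refine Finset.sum_congr rfl fun j _ => ?_
    rw [show -((k : ℝ) * s) = (k : ℝ) * (-s) by ring, mul_pow]
    ring
  have hRem : Summable fun k : ℕ => p k * Rem r ((k : ℝ) * s) :=
    (hexp.sub hpoly).congr fun k => (key k).symm
  have hsum' : Summable fun k : ℕ => p k * ((-1 : ℝ) ^ r * Rem r ((k : ℝ) * s)) :=
    (hRem.mul_left ((-1 : ℝ) ^ r)).congr fun k => by ring
  have hnn : ∀ k : ℕ, 0 ≤ p k * ((-1 : ℝ) ^ r * Rem r ((k : ℝ) * s)) := fun k =>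
    mul_nonneg (hp k) (Rem_sign r _ (by positivity))
  rw [← ENNReal.ofReal_tsum_of_nonneg hnn hsum']
  congr 1
  have h1 : (∑' k, p k * ((-1 : ℝ) ^ r * Rem r ((k : ℝ) * s)))
      = (-1 : ℝ) ^ r * ∑' k, p k * Rem r ((k : ℝ) * s) := by
    rw [← tsum_mul_left]
    exact tsum_congr fun k => by ring
  rw [h1]
  congr 1
  rw [tsum_congr key, hexp.tsum_sub hpoly,
    Summable.tsum_finsetSum fun j hj => (hS j (Finset.mem_range.mp hj)).mul_left _]
  congr 1
  exact Finset.sum_congr rfl fun j _ => tsum_mul_left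

open Filter Topology in
lemma M_le (q₁ q₂ : ℕ → ℝ) (h₁ : ∀ k, 0 ≤ q₁ k) (h₂ : ∀ k, 0 ≤ q₂ k) (r : ℕ)
    (hT : ∀ s : ℝ, 0 < s →
      (∑' k : ℕ, ENNReal.ofReal (q₁ k * ((-1) ^ r * Rem r ((k : ℝ) * s)))) ≤
        ∑' k : ℕ, ENNReal.ofReal (q₂ k * ((-1) ^ r * Rem r ((k : ℝ) * s)))) :
    (∑' k : ℕ, ENNReal.ofReal ((k : ℝ) ^ r * q₁ k)) ≤
      ∑' k : ℕ, ENNReal.ofReal ((k : ℝ) ^ r * q₂ k) := by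
  set M₂ := ∑' k : ℕ, ENNReal.ofReal ((k : ℝ) ^ r * q₂ k) with hM₂
  rw [ENNReal.tsum_eq_iSup_sum]
  refine iSup_le fun F => ?_
  have key : ∀ s : ℝ, 0 < s →
      ENNReal.ofReal (∑ k ∈ F, (k : ℝ) ^ r * q₁ k * Real.exp (-((k : ℝ) * s))) ≤ M₂ := by
    intro s hs
    have hc : (0:ℝ) < s ^ r / r.factorial := by positivity
    have step1 : ∀ k : ℕ,
        ENNReal.ofReal (s ^ r / r.factorial * ((k : ℝ) ^ r * q₁ k * Real.exp (-((k : ℝ) * s))))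
          ≤ ENNReal.ofReal (q₁ k * ((-1) ^ r * Rem r ((k : ℝ) * s))) := by
      intro k
      apply ENNReal.ofReal_le_ofReal
      have hb := (Rem_bounds r ((k : ℝ) * s) (by positivity)).1
      calc s ^ r / r.factorial * ((k : ℝ) ^ r * q₁ k * Real.exp (-((k : ℝ) * s)))
          = q₁ k * (((k : ℝ) * s) ^ r * Real.exp (-((k : ℝ) * s)) / r.factorial) := by
            rw [mul_pow]; ring
        _ ≤ q₁ k * ((-1) ^ r * Rem r ((k : ℝ) * s)) := mul_le_mul_of_nonneg_left hb (h₁ k)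
    have step2 : ∀ k : ℕ, ENNReal.ofReal (q₂ k * ((-1) ^ r * Rem r ((k : ℝ) * s)))
        ≤ ENNReal.ofReal (s ^ r / r.factorial) * ENNReal.ofReal ((k : ℝ) ^ r * q₂ k) := by
      intro k
      rw [← ENNReal.ofReal_mul hc.le]
      apply ENNReal.ofReal_le_ofReal
      have hb := (Rem_bounds r ((k : ℝ) * s) (by positivity)).2
      calc q₂ k * ((-1) ^ r * Rem r ((k : ℝ) * s))
          ≤ q₂ k * (((k : ℝ) * s) ^ r / r.factorial) := mul_le_mul_of_nonneg_left hb (h₂ k)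
        _ = s ^ r / r.factorial * ((k : ℝ) ^ r * q₂ k) := by rw [mul_pow]; ring
    have chain : ENNReal.ofReal (s ^ r / r.factorial) *
        ENNReal.ofReal (∑ k ∈ F, (k : ℝ) ^ r * q₁ k * Real.exp (-((k : ℝ) * s)))
          ≤ ENNReal.ofReal (s ^ r / r.factorial) * M₂ := by
      calc ENNReal.ofReal (s ^ r / r.factorial) *
            ENNReal.ofReal (∑ k ∈ F, (k : ℝ) ^ r * q₁ k * Real.exp (-((k : ℝ) * s)))
          = ENNReal.ofReal (∑ k ∈ F, s ^ r / r.factorial *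
              ((k : ℝ) ^ r * q₁ k * Real.exp (-((k : ℝ) * s)))) := by
            rw [← ENNReal.ofReal_mul hc.le, Finset.mul_sum]
        _ = ∑ k ∈ F, ENNReal.ofReal (s ^ r / r.factorial *
              ((k : ℝ) ^ r * q₁ k * Real.exp (-((k : ℝ) * s)))) := by
            exact ENNReal.ofReal_sum_of_nonneg fun k _ =>
              mul_nonneg hc.le (mul_nonneg (mul_nonneg (by positivity) (h₁ k)) (Real.exp_nonneg _))
        _ ≤ ∑ k ∈ F, ENNReal.ofReal (q₁ k * ((-1) ^ r * Rem r ((k : ℝ) * s))) :=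
            Finset.sum_le_sum fun k _ => step1 k
        _ ≤ ∑' k : ℕ, ENNReal.ofReal (q₁ k * ((-1) ^ r * Rem r ((k : ℝ) * s))) :=
            ENNReal.sum_le_tsum F
        _ ≤ ∑' k : ℕ, ENNReal.ofReal (q₂ k * ((-1) ^ r * Rem r ((k : ℝ) * s))) := hT s hs
        _ ≤ ∑' k : ℕ, ENNReal.ofReal (s ^ r / r.factorial) * ENNReal.ofReal ((k : ℝ) ^ r * q₂ k) :=
            ENNReal.tsum_le_tsum fun k => step2 k
        _ = ENNReal.ofReal (s ^ r / r.factorial) * M₂ := ENNReal.tsum_mul_left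
    exact (ENNReal.mul_le_mul_iff_right (ne_of_gt (ENNReal.ofReal_pos.mpr hc))
      ENNReal.ofReal_ne_top).mp chain
  have cont : Tendsto (fun s : ℝ => ∑ k ∈ F, (k : ℝ) ^ r * q₁ k * Real.exp (-((k : ℝ) * s)))
      (nhdsWithin 0 (Set.Ioi 0)) (nhds (∑ k ∈ F, (k : ℝ) ^ r * q₁ k)) := by
    have hcont : Continuous fun s : ℝ => ∑ k ∈ F, (k : ℝ) ^ r * q₁ k * Real.exp (-((k : ℝ) * s)) := by
      exact continuous_finset_sum F fun k _ => by continuity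
    have h0 := hcont.tendsto 0
    simp only [mul_zero, neg_zero, Real.exp_zero, mul_one] at h0
    exact h0.mono_left nhdsWithin_le_nhds
  have final : ENNReal.ofReal (∑ k ∈ F, (k : ℝ) ^ r * q₁ k) ≤ M₂ :=
    le_of_tendsto ((ENNReal.continuous_ofReal.tendsto _).comp cont)
      (eventually_nhdsWithin_of_forall fun s hs => key s hs)
  calc (∑ k ∈ F, ENNReal.ofReal ((k : ℝ) ^ r * q₁ k))
      = ENNReal.ofReal (∑ k ∈ F, (k : ℝ) ^ r * q₁ k) :=
        (ENNReal.ofReal_sum_of_nonneg fun k _ => mul_nonneg (by positivity) (h₁ k)).symm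
    _ ≤ M₂ := final

lemma main_aux (p₁ p₂ : ℕ → ℝ) (hp₁ : ∀ k, 0 ≤ p₁ k) (hp₂ : ∀ k, 0 ≤ p₂ k)
    (hΦ : ∀ t ∈ Set.Ioo (0:ℝ) 1, (∑' k, p₁ k * t ^ k) ≤ ∑' k, p₂ k * t ^ k)
    (r : ℕ) (hr : 0 < r)
    (hS₁ : ∀ j < r, Summable fun k : ℕ => (k : ℝ) ^ j * p₁ k)
    (hS₂ : ∀ j < r, Summable fun k : ℕ => (k : ℝ) ^ j * p₂ k)
    (hEq : ∀ j < r, (∑' k : ℕ, (k : ℝ) ^ j * p₁ k) = ∑' k : ℕ, (k : ℝ) ^ j * p₂ k) :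
    (Even r → (∑' k : ℕ, ENNReal.ofReal ((k : ℝ) ^ r * p₁ k)) ≤
        ∑' k : ℕ, ENNReal.ofReal ((k : ℝ) ^ r * p₂ k)) ∧
    (Odd r → (∑' k : ℕ, ENNReal.ofReal ((k : ℝ) ^ r * p₂ k)) ≤
        ∑' k : ℕ, ENNReal.ofReal ((k : ℝ) ^ r * p₁ k)) := by
  have hG : ∀ s : ℝ, 0 < s →
      (∑' k : ℕ, p₁ k * Real.exp (-((k : ℝ) * s))) ≤
        ∑' k : ℕ, p₂ k * Real.exp (-((k : ℝ) * s)) := by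
    intro s hs
    have ht : Real.exp (-s) ∈ Set.Ioo (0:ℝ) 1 :=
      ⟨Real.exp_pos _, (Real.exp_lt_one_iff (x := -s)).mpr (by linarith)⟩
    have h := hΦ _ ht
    have hconv : ∀ p : ℕ → ℝ,
        (∑' k : ℕ, p k * Real.exp (-s) ^ k) = ∑' k : ℕ, p k * Real.exp (-((k : ℝ) * s)) :=
      fun p => tsum_congr fun k => by rw [← Real.exp_nat_mul, mul_neg]
    rw [hconv p₁, hconv p₂] at h
    exact h
  have hP : ∀ s : ℝ,
      (∑ j ∈ Finset.range r, (-s) ^ j / j.factorial * ∑' k : ℕ, (k : ℝ) ^ j * p₁ k) =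
        ∑ j ∈ Finset.range r, (-s) ^ j / j.factorial * ∑' k : ℕ, (k : ℝ) ^ j * p₂ k :=
    fun s => Finset.sum_congr rfl fun j hj => by rw [hEq j (Finset.mem_range.mp hj)]
  constructor
  · intro he
    apply M_le p₁ p₂ hp₁ hp₂ r
    intro s hs
    rw [T_eq p₁ hp₁ r hr hS₁ s hs.le, T_eq p₂ hp₂ r hr hS₂ s hs.le]
    apply ENNReal.ofReal_le_ofReal
    rw [he.neg_one_pow]
    have h1 := hG s hs
    have h2 := hP s
    simp only [one_mul]
    linarith
  · intro ho
    apply M_le p₂ p₁ hp₂ hp₁ r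
    intro s hs
    rw [T_eq p₁ hp₁ r hr hS₁ s hs.le, T_eq p₂ hp₂ r hr hS₂ s hs.le]
    apply ENNReal.ofReal_le_ofReal
    rw [ho.neg_one_pow]
    have h1 := hG s hs
    have h2 := hP s
    simp only [neg_one_mul, neg_sub]
    linarith

lemma summable_of_tsum_eq_one {a : ℕ → ℝ} (h : ∑' k, a k = 1) : Summable a := by
  by_contra hc
  rw [tsum_eq_zero_of_not_summable hc] at h
  norm_num at h

lemma tsum_ofReal_eq_one {a : ℕ → ℝ} (ha : ∀ k, 0 ≤ a k) (h : ∑' k, a k = 1) :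
    (∑' k : ℕ, ENNReal.ofReal (a k)) = 1 := by
  rw [← ENNReal.ofReal_tsum_of_nonneg ha (summable_of_tsum_eq_one h), h, ENNReal.ofReal_one]

/-- Remark 6.6(a)-(b) / Appendix C of the paper. If two critical offspring
distributions satisfy `Φ₁ ≤ Φ₂` on `(0,1)` and have equal finite `j`-th moments for
`j = 1, …, r−1` (`r ≥ 2`), then (in `[0,∞]`) the `r`-th moments satisfy
`∑ k^r p₁ₖ ≤ ∑ k^r p₂ₖ` when `r` is even and the reverse inequality when `r` is odd.
In particular (`r = 2`), `σ₁² ≤ σ₂²`. -/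
theorem stmt17
    (p₁ p₂ : ℕ → ℝ) (hp₁ : ∀ k, 0 ≤ p₁ k) (hp₂ : ∀ k, 0 ≤ p₂ k)
    (hpsum₁ : ∑' k, p₁ k = 1) (hpsum₂ : ∑' k, p₂ k = 1)
    (hcrit₁ : ∑' k : ℕ, (k : ℝ) * p₁ k = 1) (hcrit₂ : ∑' k : ℕ, (k : ℝ) * p₂ k = 1)
    (hΦ : ∀ t ∈ Set.Ioo (0:ℝ) 1, (∑' k, p₁ k * t ^ k) ≤ ∑' k, p₂ k * t ^ k)
    (r : ℕ) (hr : 2 ≤ r)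
    (hmom : ∀ j : ℕ, 1 ≤ j → j ≤ r - 1 →
      (∑' k : ℕ, ENNReal.ofReal ((k : ℝ) ^ j * p₁ k)) =
        (∑' k : ℕ, ENNReal.ofReal ((k : ℝ) ^ j * p₂ k)) ∧
      (∑' k : ℕ, ENNReal.ofReal ((k : ℝ) ^ j * p₁ k)) < ⊤) :
    ((Even r →
      (∑' k : ℕ, ENNReal.ofReal ((k : ℝ) ^ r * p₁ k)) ≤
        ∑' k : ℕ, ENNReal.ofReal ((k : ℝ) ^ r * p₂ k)) ∧
     (Odd r →
      (∑' k : ℕ, ENNReal.ofReal ((k : ℝ) ^ r * p₂ k)) ≤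
        ∑' k : ℕ, ENNReal.ofReal ((k : ℝ) ^ r * p₁ k))) ∧
    (∑' k : ℕ, ENNReal.ofReal ((k : ℝ) * ((k : ℝ) - 1) * p₁ k)) ≤
      ∑' k : ℕ, ENNReal.ofReal ((k : ℝ) * ((k : ℝ) - 1) * p₂ k) := by
  have hsp₁ : Summable p₁ := summable_of_tsum_eq_one hpsum₁
  have hsp₂ : Summable p₂ := summable_of_tsum_eq_one hpsum₂
  have hsk₁ : Summable fun k : ℕ => (k : ℝ) * p₁ k := summable_of_tsum_eq_one hcrit₁
  have hsk₂ : Summable fun k : ℕ => (k : ℝ) * p₂ k := summable_of_tsum_eq_one hcrit₂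
  have hnn₁ : ∀ j, ∀ k : ℕ, 0 ≤ (k : ℝ) ^ j * p₁ k := fun j k => mul_nonneg (by positivity) (hp₁ k)
  have hnn₂ : ∀ j, ∀ k : ℕ, 0 ≤ (k : ℝ) ^ j * p₂ k := fun j k => mul_nonneg (by positivity) (hp₂ k)
  -- summability / equality of moments j < r
  have hS₁ : ∀ j < r, Summable fun k : ℕ => (k : ℝ) ^ j * p₁ k := by
    intro j hj
    rcases Nat.eq_zero_or_pos j with h0 | h1
    · subst h0; simpa using hsp₁
    · exact summable_of_ofReal_tsum_ne_top (hnn₁ j)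
        (hmom j h1 (Nat.le_sub_one_of_lt hj)).2.ne
  have hS₂ : ∀ j < r, Summable fun k : ℕ => (k : ℝ) ^ j * p₂ k := by
    intro j hj
    rcases Nat.eq_zero_or_pos j with h0 | h1
    · subst h0; simpa using hsp₂
    · refine summable_of_ofReal_tsum_ne_top (hnn₂ j) ?_
      rw [← (hmom j h1 (Nat.le_sub_one_of_lt hj)).1]
      exact (hmom j h1 (Nat.le_sub_one_of_lt hj)).2.ne
  have hEq : ∀ j < r, (∑' k : ℕ, (k : ℝ) ^ j * p₁ k) = ∑' k : ℕ, (k : ℝ) ^ j * p₂ k := by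
    intro j hj
    rcases Nat.eq_zero_or_pos j with h0 | h1
    · subst h0; simpa using hpsum₁.trans hpsum₂.symm
    · have h := (hmom j h1 (Nat.le_sub_one_of_lt hj)).1
      rw [← ENNReal.ofReal_tsum_of_nonneg (hnn₁ j) (hS₁ j hj),
        ← ENNReal.ofReal_tsum_of_nonneg (hnn₂ j) (hS₂ j hj)] at h
      exact (ENNReal.ofReal_eq_ofReal_iff (tsum_nonneg (hnn₁ j)) (tsum_nonneg (hnn₂ j))).mp h
  refine ⟨main_aux p₁ p₂ hp₁ hp₂ hΦ r (by omega) hS₁ hS₂ hEq, ?_⟩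
  -- σ² part : r = 2
  have hS₁' : ∀ j < 2, Summable fun k : ℕ => (k : ℝ) ^ j * p₁ k := by
    intro j hj
    interval_cases j
    · simpa using hsp₁
    · simpa using hsk₁
  have hS₂' : ∀ j < 2, Summable fun k : ℕ => (k : ℝ) ^ j * p₂ k := by
    intro j hj
    interval_cases j
    · simpa using hsp₂
    · simpa using hsk₂
  have hEq' : ∀ j < 2, (∑' k : ℕ, (k : ℝ) ^ j * p₁ k) = ∑' k : ℕ, (k : ℝ) ^ j * p₂ k := by
    intro j hj
    interval_cases j
    · simpa using hpsum₁.trans hpsum₂.symm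
    · simp only [pow_one]
      rw [hcrit₁, hcrit₂]
  have h2 := (main_aux p₁ p₂ hp₁ hp₂ hΦ 2 (by norm_num) hS₁' hS₂' hEq').1 (by decide)
  have hkk : ∀ k : ℕ, 0 ≤ (k : ℝ) * ((k : ℝ) - 1) := by
    intro k
    rcases Nat.eq_zero_or_pos k with h0 | h1
    · subst h0; norm_num
    · have : (1:ℝ) ≤ (k : ℝ) := by exact_mod_cast h1
      nlinarith
  have split : ∀ (p : ℕ → ℝ), (∀ k, 0 ≤ p k) →
      (∑' k : ℕ, ENNReal.ofReal ((k : ℝ) ^ 2 * p k)) =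
        (∑' k : ℕ, ENNReal.ofReal ((k : ℝ) * ((k : ℝ) - 1) * p k)) +
          ∑' k : ℕ, ENNReal.ofReal ((k : ℝ) * p k) := by
    intro p hp
    rw [← ENNReal.tsum_add]
    refine tsum_congr fun k => ?_
    rw [← ENNReal.ofReal_add (mul_nonneg (hkk k) (hp k)) (mul_nonneg (by positivity) (hp k))]
    congr 1
    ring
  rw [split p₁ hp₁, split p₂ hp₂, tsum_ofReal_eq_one (fun k => mul_nonneg (by positivity) (hp₁ k)) hcrit₁,
    tsum_ofReal_eq_one (fun k => mul_nonneg (by positivity) (hp₂ k)) hcrit₂] at h2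
  exact (ENNReal.add_le_add_iff_right ENNReal.one_ne_top).mp h2
end

section
/- For every real t ≠ 0, Re( Γ(it − 1/2) / Γ(it) ) > 0, where Γ denotes the complex Gamma function and i is the imaginary unit. (Equivalently, for real t ≠ 0 the quotient Γ(1 − it)/Γ(3/2 − it) is not real, with argument strictly between −π/4 and 0 when t < 0; this is the positivity of the limiting variance (1/√π)·Re(Γ(it−1/2)/Γ(it))·σ^{-2} appearing in the central limit theorem for X_n(it).) -/
open Polynomial Finset MeasureTheory

/-- central binomial coefficient over 4^n -/
noncomputable def cb (n : ℕ) : ℝ := Nat.centralBinom n / 4 ^ n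

lemma cb_pos (n : ℕ) : 0 < cb n := by
  unfold cb
  exact div_pos (by exact_mod_cast n.centralBinom_pos) (by positivity)

lemma cb_succ (n : ℕ) : cb (n + 1) = cb n * ((2 * n + 1) / (2 * n + 2)) := by
  have h := Nat.succ_mul_centralBinom_succ n
  have h' : ((n : ℝ) + 1) * (Nat.centralBinom (n + 1) : ℝ) =
      2 * (2 * n + 1) * Nat.centralBinom n := by exact_mod_cast h
  unfold cb
  have hn : ((n : ℝ) + 1) ≠ 0 := by positivity
  field_simp
  linear_combination (4 ^ n * 2 : ℝ) * h'

lemma cb_le_one (n : ℕ) : cb n ≤ 1 := by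
  induction n with
  | zero => simp [cb, Nat.centralBinom]
  | succ n ih =>
    rw [cb_succ]
    have h1 : (2 * (n:ℝ) + 1) / (2 * n + 2) ≤ 1 := by
      rw [div_le_one (by positivity)]; linarith
    have := cb_pos n
    nlinarith

lemma dP_half (n : ℕ) :
    (descPochhammer ℤ n).smeval ((-1 : ℝ)/2) = (-1) ^ n * n.factorial * cb n := by
  induction n with
  | zero => simp [descPochhammer_zero, Polynomial.smeval_one, cb, Nat.centralBinom]
  | succ n ih =>
    rw [descPochhammer_succ_right, Polynomial.smeval_mul, ih, Polynomial.smeval_sub,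
      Polynomial.smeval_X, Polynomial.smeval_natCast, cb_succ]
    have hfac : (Nat.factorial (n+1) : ℝ) = (n+1) * Nat.factorial n := by
      rw [Nat.factorial_succ]; push_cast; ring
    rw [pow_succ, hfac]
    simp only [pow_one, pow_zero, nsmul_eq_mul, mul_one]
    have hn : (2*(n:ℝ)+2) ≠ 0 := by positivity
    field_simp
    ring

lemma dP_negone (n : ℕ) :
    (descPochhammer ℤ n).smeval ((-1 : ℝ)) = (-1) ^ n * n.factorial := by
  induction n with
  | zero => simp [descPochhammer_zero, Polynomial.smeval_one]
  | succ n ih =>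
    rw [descPochhammer_succ_right, Polynomial.smeval_mul, ih, Polynomial.smeval_sub,
      Polynomial.smeval_X, Polynomial.smeval_natCast]
    have hfac : (Nat.factorial (n+1) : ℝ) = (n+1) * Nat.factorial n := by
      rw [Nat.factorial_succ]; push_cast; ring
    rw [pow_succ, hfac]
    simp only [pow_one, pow_zero, nsmul_eq_mul, mul_one]
    ring

/-- convolution identity: `∑_{i+j=n} cb i * cb j = 1` -/
lemma cb_conv (n : ℕ) : ∑ ij ∈ antidiagonal n, cb ij.1 * cb ij.2 = 1 := by
  have h := Ring.descPochhammer_smeval_add (R := ℝ) (r := (-1:ℝ)/2) (s := (-1:ℝ)/2) n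
    (Commute.all _ _)
  rw [show ((-1:ℝ)/2 + (-1:ℝ)/2) = -1 by ring, dP_negone] at h
  have key : ∀ ij ∈ antidiagonal n,
      (Nat.choose n ij.1 : ℝ) * ((descPochhammer ℤ ij.1).smeval ((-1:ℝ)/2) *
        (descPochhammer ℤ ij.2).smeval ((-1:ℝ)/2)) =
      (-1)^n * n.factorial * (cb ij.1 * cb ij.2) := by
    intro ij hij
    rw [Finset.HasAntidiagonal.mem_antidiagonal] at hij
    rw [dP_half, dP_half]
    have hfac : (Nat.choose n ij.1 : ℝ) * ij.1.factorial * ij.2.factorial = n.factorial := by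
      have := Nat.choose_mul_factorial_mul_factorial (show ij.1 ≤ n by omega)
      rw [show n - ij.1 = ij.2 by omega] at this
      exact_mod_cast this
    have hsign : ((-1:ℝ))^ij.1 * (-1)^ij.2 = (-1)^n := by
      rw [← pow_add, hij]
    linear_combination (cb ij.1 * cb ij.2 * ((-1:ℝ)^ij.1 * (-1)^ij.2)) * hfac
      + (cb ij.1 * cb ij.2 * (n.factorial:ℝ)) * hsign
  rw [Finset.sum_congr rfl key, ← Finset.mul_sum] at h
  have hne : ((-1:ℝ))^n * n.factorial ≠ 0 := by
    apply mul_ne_zero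
    · exact pow_ne_zero _ (by norm_num)
    · exact_mod_cast Nat.factorial_ne_zero n
  have h2 : ((-1:ℝ))^n * n.factorial * 1 = (-1)^n * n.factorial *
      (∑ ij ∈ antidiagonal n, cb ij.1 * cb ij.2) := by rw [mul_one]; exact h
  exact (mul_left_cancel₀ hne h2).symm

lemma cb_summable {x : ℝ} (h0 : 0 ≤ x) (h1 : x < 1) : Summable (fun n => cb n * x ^ n) := by
  refine Summable.of_nonneg_of_le (fun n => ?_) (fun n => ?_)
    (summable_geometric_of_lt_one h0 h1)
  · exact mul_nonneg (cb_pos n).le (pow_nonneg h0 n)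
  · calc cb n * x ^ n ≤ 1 * x ^ n := by
          exact mul_le_mul_of_nonneg_right (cb_le_one n) (pow_nonneg h0 n)
    _ = x ^ n := one_mul _

lemma cb_hasSum {x : ℝ} (h0 : 0 ≤ x) (h1 : x < 1) :
    HasSum (fun n => cb n * x ^ n) ((1 - x) ^ (-(1/2) : ℝ)) := by
  have hs := cb_summable h0 h1
  have hnorm : Summable (fun n => ‖cb n * x ^ n‖) := by
    refine hs.congr fun n => ?_
    rw [Real.norm_eq_abs, abs_of_nonneg (mul_nonneg (cb_pos n).le (pow_nonneg h0 n))]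
  have hx : (0:ℝ) < 1 - x := by linarith
  set S := ∑' n, cb n * x ^ n with hS
  have hcauchy : S * S = ∑' n : ℕ, x ^ n := by
    rw [hS, tsum_mul_tsum_eq_tsum_sum_antidiagonal_of_summable_norm hnorm hnorm]
    congr 1
    funext n
    have : ∀ ij ∈ Finset.HasAntidiagonal.antidiagonal n,
        cb ij.1 * x ^ ij.1 * (cb ij.2 * x ^ ij.2) = cb ij.1 * cb ij.2 * x ^ n := by
      intro ij hij
      rw [Finset.HasAntidiagonal.mem_antidiagonal] at hij
      rw [← hij, pow_add]; ring
    rw [Finset.sum_congr rfl this, ← Finset.sum_mul, cb_conv, one_mul]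
  rw [tsum_geometric_of_lt_one h0 h1] at hcauchy
  set y := (1 - x) ^ (-(1/2) : ℝ) with hy
  have hypos : 0 < y := Real.rpow_pos_of_pos hx _
  have hyy : y * y = (1 - x)⁻¹ := by
    rw [hy, ← Real.rpow_add hx]
    norm_num
    rw [Real.rpow_neg_one]
  have hSpos : (0:ℝ) < S := by
    have h1le : cb 0 * x ^ 0 ≤ S :=
      Summable.le_tsum hs 0 (fun i _ => mul_nonneg (cb_pos i).le (pow_nonneg h0 i))
    simp [cb, Nat.centralBinom] at h1le
    linarith
  have hSy : S = y := by
    have h := hcauchy.trans hyy.symm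
    rcases mul_self_eq_mul_self_iff.mp h with h' | h'
    · exact h'
    · exfalso; rw [h'] at hSpos; linarith
  exact (Summable.hasSum_iff hs).mpr hSy

lemma one_sub_intable : IntervalIntegrable (fun x : ℝ => (1 - x) ^ (-(1/2) : ℝ)) volume 0 1 := by
  have h := intervalIntegral.intervalIntegrable_rpow' (a := 0) (b := 1) (r := -(1/2))
    (by norm_num)
  have h2 := h.comp_sub_left 1
  norm_num at h2
  exact h2.symm

lemma poly_intable (n : ℕ) : IntegrableOn (fun x : ℝ => cb n * x ^ n) (Set.Ioo 0 1) volume := by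
  have : Continuous (fun x : ℝ => cb n * x ^ n) := continuous_const.mul (continuous_pow n)
  exact (this.integrableOn_Icc (a := 0) (b := 1)).mono_set Set.Ioo_subset_Icc_self

lemma poly_int (n : ℕ) : ∫ x in Set.Ioo (0:ℝ) 1, cb n * x ^ n = cb n / (n + 1) := by
  rw [MeasureTheory.integral_const_mul, ← MeasureTheory.integral_Ioc_eq_integral_Ioo,
    ← intervalIntegral.integral_of_le zero_le_one, integral_pow]
  rw [one_pow, zero_pow (Nat.succ_ne_zero n), sub_zero]
  push_cast
  ring

lemma cb_div_summable : Summable (fun n : ℕ => cb n / (n + 1)) := by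
  have hIntf : IntegrableOn (fun x : ℝ => (1 - x) ^ (-(1/2):ℝ)) (Set.Ioo 0 1) volume := by
    have := (intervalIntegrable_iff_integrableOn_Ioc_of_le
      (by norm_num : (0:ℝ) ≤ 1)).mp one_sub_intable
    exact this.mono_set Set.Ioo_subset_Ioc_self
  apply summable_of_sum_range_le (c := ∫ x in Set.Ioo (0:ℝ) 1, (1 - x) ^ (-(1/2) : ℝ))
    (fun n => div_nonneg (cb_pos n).le (by positivity))
  intro N
  calc ∑ n ∈ Finset.range N, cb n / (n + 1)
      = ∫ x in Set.Ioo (0:ℝ) 1, (∑ n ∈ Finset.range N, cb n * x ^ n) := by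
        rw [MeasureTheory.integral_finset_sum _ (fun n _ => poly_intable n)]
        exact (Finset.sum_congr rfl fun n _ => (poly_int n).symm)
    _ ≤ ∫ x in Set.Ioo (0:ℝ) 1, (1 - x) ^ (-(1/2) : ℝ) := by
        apply MeasureTheory.setIntegral_mono_on
          (MeasureTheory.integrable_finset_sum _ (fun n _ => poly_intable n)) hIntf
          measurableSet_Ioo
        intro x hx
        exact sum_le_hasSum (Finset.range N)
          (fun i _ => mul_nonneg (cb_pos i).le (pow_nonneg hx.1.le i))
          (cb_hasSum hx.1.le hx.2)

open Complex in
lemma beta_series (t : ℝ) :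
    Complex.betaIntegral (1 - (t:ℂ) * Complex.I) (1/2) =
      ∑' n : ℕ, (cb n : ℂ) * (1 / ((n : ℂ) + 1 - (t:ℂ) * Complex.I)) := by
  set z : ℂ := (t:ℂ) * Complex.I with hz
  have hzre : z.re = 0 := by simp [hz]
  have hrepos : ∀ n : ℕ, 0 < ((n : ℂ) + 1 - z).re := by
    intro n
    simp only [Complex.sub_re, Complex.add_re, Complex.natCast_re, Complex.one_re, hzre, sub_zero]
    positivity
  set F : ℕ → ℝ → ℂ := fun n x => (cb n : ℂ) * (x:ℂ) ^ ((n : ℂ) - z) with hF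
  -- continuity/measurability
  have hmeas : ∀ n : ℕ, AEStronglyMeasurable (F n)
      (volume.restrict (Set.Ioo (0:ℝ) 1)) := by
    intro n
    apply ContinuousOn.aestronglyMeasurable _ measurableSet_Ioo
    apply ContinuousOn.mul continuousOn_const
    apply continuousOn_of_forall_continuousAt
    intro x hx
    apply ContinuousAt.cpow (Complex.continuous_ofReal.continuousAt) continuousAt_const
    exact Complex.ofReal_mem_slitPlane.2 hx.1
  -- norm of terms
  have hnorm : ∀ n : ℕ, ∀ x ∈ Set.Ioo (0:ℝ) 1, ‖F n x‖ = cb n * x ^ n := by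
    intro n x hx
    rw [hF]
    simp only [norm_mul]
    rw [Complex.norm_cpow_eq_rpow_re_of_pos hx.1]
    simp only [Complex.sub_re, Complex.natCast_re, hzre, sub_zero]
    rw [Real.rpow_natCast, Complex.norm_real, Real.norm_eq_abs, _root_.abs_of_nonneg (cb_pos n).le]
  -- the domination
  have heach : ∀ n : ℕ, ∫⁻ x in Set.Ioo (0:ℝ) 1, (‖F n x‖₊ : ENNReal) =
      ENNReal.ofReal (cb n / (n + 1)) := by
    intro n
    calc ∫⁻ x in Set.Ioo (0:ℝ) 1, (‖F n x‖₊ : ENNReal)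
        = ∫⁻ x in Set.Ioo (0:ℝ) 1, ENNReal.ofReal (cb n * x ^ n) := by
          apply MeasureTheory.setLIntegral_congr_fun measurableSet_Ioo
          intro x hx
          dsimp only
          rw [← hnorm n x hx]
          exact (ofReal_norm _).symm
      _ = ENNReal.ofReal (∫ x in Set.Ioo (0:ℝ) 1, cb n * x ^ n) :=
          (MeasureTheory.ofReal_integral_eq_lintegral_ofReal (poly_intable n)
            (MeasureTheory.ae_restrict_of_forall_mem measurableSet_Ioo
              (fun x hx => mul_nonneg (cb_pos n).le (pow_nonneg hx.1.le n)))).symm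
      _ = ENNReal.ofReal (cb n / (n + 1)) := by rw [poly_int]
  have hdom : ∑' n : ℕ, ∫⁻ x in Set.Ioo (0:ℝ) 1, (‖F n x‖₊ : ENNReal) ≠ ⊤ := by
    simp only [heach]
    rw [← ENNReal.ofReal_tsum_of_nonneg
      (fun n => div_nonneg (cb_pos n).le (by positivity)) cb_div_summable]
    exact ENNReal.ofReal_ne_top
  -- pointwise series expansion of the integrand
  have hpt : ∀ x ∈ Set.Ioo (0:ℝ) 1,
      (x:ℂ) ^ (1 - z - 1) * (1 - (x:ℂ)) ^ ((1:ℂ)/2 - 1) = ∑' n : ℕ, F n x := by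
    intro x hx
    obtain ⟨hx0, hx1⟩ := hx
    have hxne : (x:ℂ) ≠ 0 := Complex.ofReal_ne_zero.mpr hx0.ne'
    have h1x : (0:ℝ) < 1 - x := by linarith
    calc (x:ℂ) ^ (1 - z - 1) * (1 - (x:ℂ)) ^ ((1:ℂ)/2 - 1)
        = (x:ℂ) ^ (-z) * (((1 - x) ^ (-(1/2):ℝ) : ℝ) : ℂ) := by
          rw [Complex.ofReal_cpow h1x.le]
          push_cast
          norm_num
      _ = (x:ℂ) ^ (-z) * ∑' n : ℕ, ((cb n * x ^ n : ℝ) : ℂ) := by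
          rw [← Complex.ofReal_tsum, (cb_hasSum hx0.le hx1).tsum_eq]
      _ = ∑' n : ℕ, F n x := by
          rw [← tsum_mul_left]
          congr 1
          funext n
          rw [hF]
          push_cast
          rw [sub_eq_add_neg, Complex.cpow_add _ _ hxne, Complex.cpow_natCast]
          ring
  -- value of each term integral
  have hterm : ∀ n : ℕ, ∫ x in Set.Ioo (0:ℝ) 1, F n x =
      (cb n : ℂ) * (1 / ((n : ℂ) + 1 - z)) := by
    intro n
    have hbeq : Complex.betaIntegral ((n:ℂ) + 1 - z) 1 = ∫ x in (0:ℝ)..1, (x:ℂ) ^ ((n:ℂ) - z) := by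
      rw [Complex.betaIntegral]
      apply intervalIntegral.integral_congr
      intro x _
      simp only [sub_self, Complex.cpow_zero, mul_one]
      congr 1
      ring
    rw [hF, ← MeasureTheory.integral_Ioc_eq_integral_Ioo,
      ← intervalIntegral.integral_of_le zero_le_one, intervalIntegral.integral_const_mul,
      ← hbeq, Complex.betaIntegral_eval_one_right (hrepos n)]
  -- assemble
  rw [Complex.betaIntegral, intervalIntegral.integral_of_le zero_le_one,
    MeasureTheory.integral_Ioc_eq_integral_Ioo,
    MeasureTheory.setIntegral_congr_fun measurableSet_Ioo hpt,
    MeasureTheory.integral_tsum hmeas hdom]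
  exact tsum_congr hterm

lemma ratio_calc {a b c d B pc ch sh g i : ℂ} (hb : b ≠ 0) (hc : c ≠ 0) (hd : d ≠ 0)
    (hch : ch ≠ 0) (hsh : sh ≠ 0) (hπ : pc ≠ 0) (hg : g ≠ 0) (hi : i * i = -1)
    (h1 : a * c = -(pc / ch)) (h2 : b * d = pc / (sh * i)) (h3 : d * g = c * B) :
    a / b = -i * (sh / ch / g) * B := by
  have hi0 : i ≠ 0 := by
    intro h
    rw [h, mul_zero] at hi
    exact absurd hi.symm (by norm_num)
  have e1 : a = -(pc / ch) / c := by rw [eq_div_iff hc]; linear_combination h1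
  have e2 : b = pc / (sh * i) / d := by rw [eq_div_iff hd]; linear_combination h2
  have e3 : B = d * g / c := by rw [eq_div_iff hc]; linear_combination -h3
  rw [e1, e2, e3]
  field_simp

open Complex Real in
/-- positivity of the limiting variance in Theorem 1.3; Appendix D of the
paper. For every real `t ≠ 0`, `Re(Γ(it − 1/2)/Γ(it)) > 0`. -/
theorem stmt19 (t : ℝ) (ht : t ≠ 0) :
    0 < (Complex.Gamma ((t : ℂ) * Complex.I - 1/2) / Complex.Gamma ((t : ℂ) * Complex.I)).re := by
  set z : ℂ := (t:ℂ) * Complex.I with hz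
  -- trig values
  have hπz : (π : ℂ) * z = ((π * t : ℝ) : ℂ) * Complex.I := by push_cast; ring
  have hsin : Complex.sin ((π : ℂ) * z) = ((Real.sinh (π * t) : ℝ) : ℂ) * Complex.I := by
    rw [hπz, Complex.sin_mul_I, Complex.ofReal_sinh]
  have hcos : Complex.sin ((π : ℂ) * (z - 1/2)) = -((Real.cosh (π * t) : ℝ) : ℂ) := by
    have h1 : (π : ℂ) * (z - 1/2) = (π : ℂ) * z - (π : ℂ) / 2 := by ring
    rw [h1, Complex.sin_sub_pi_div_two, hπz, Complex.cos_mul_I, Complex.ofReal_cosh]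
  -- nonvanishing
  have hG32 : Complex.Gamma (3/2 - z) ≠ 0 := by
    apply Complex.Gamma_ne_zero_of_re_pos
    simp only [Complex.sub_re, hz, Complex.mul_re, Complex.I_re, Complex.I_im,
      Complex.ofReal_re, Complex.ofReal_im]
    norm_num
  have hG1z : Complex.Gamma (1 - z) ≠ 0 := by
    apply Complex.Gamma_ne_zero_of_re_pos
    simp only [Complex.sub_re, hz, Complex.mul_re, Complex.I_re, Complex.I_im,
      Complex.ofReal_re, Complex.ofReal_im, Complex.one_re]
    norm_num
  have hGz : Complex.Gamma z ≠ 0 := by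
    apply Complex.Gamma_ne_zero
    intro m h
    apply ht
    have := congrArg Complex.im h
    simpa [hz] using this
  set g : ℝ := Real.Gamma (1/2) with hgdef
  have hgpos : 0 < g := Real.Gamma_pos_of_pos (by norm_num)
  have hg : Complex.Gamma (1/2 : ℂ) = (g : ℂ) := by
    rw [show ((1:ℂ)/2) = ((1/2 : ℝ) : ℂ) by norm_num, Complex.Gamma_ofReal]
  set B : ℂ := Complex.betaIntegral (1 - z) (1/2) with hBdef
  set sh : ℝ := Real.sinh (π * t) with hshdef
  set ch : ℝ := Real.cosh (π * t) with hchdef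
  have hchpos : 0 < ch := Real.cosh_pos _
  have hshne : sh ≠ 0 := by
    rw [hshdef]
    simp only [ne_eq, Real.sinh_eq_zero]
    exact fun h => ht (by
      have := mul_eq_zero.mp h
      rcases this with h | h
      · exact absurd h Real.pi_ne_zero
      · exact h)
  -- the three identities
  have h1 : Complex.Gamma (z - 1/2) * Complex.Gamma (3/2 - z) = -((π : ℂ) / (ch : ℂ)) := by
    have := Complex.Gamma_mul_Gamma_one_sub (z - 1/2)
    rw [show (1:ℂ) - (z - 1/2) = 3/2 - z by ring, hcos] at this
    rw [this]
    rw [div_neg]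
  have h2 : Complex.Gamma z * Complex.Gamma (1 - z) = (π : ℂ) / ((sh : ℂ) * Complex.I) := by
    rw [Complex.Gamma_mul_Gamma_one_sub z, hsin]
  have h3 : Complex.Gamma (1 - z) * (g : ℂ) = Complex.Gamma (3/2 - z) * B := by
    have := Complex.Gamma_mul_Gamma_eq_betaIntegral (s := 1 - z) (t := 1/2)
      (by simp only [Complex.sub_re, hz, Complex.mul_re, Complex.I_re, Complex.I_im,
          Complex.ofReal_re, Complex.ofReal_im, Complex.one_re]; norm_num)
      (by norm_num)
    rw [hg, show (1:ℂ) - z + 1/2 = 3/2 - z by ring] at this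
    rw [this, hBdef]
  -- main identity
  have hshc : ((sh : ℝ) : ℂ) ≠ 0 := Complex.ofReal_ne_zero.mpr hshne
  have hchc : ((ch : ℝ) : ℂ) ≠ 0 := Complex.ofReal_ne_zero.mpr hchpos.ne'
  have hgc : ((g : ℝ) : ℂ) ≠ 0 := Complex.ofReal_ne_zero.mpr hgpos.ne'
  have hπc : ((π : ℝ) : ℂ) ≠ 0 := Complex.ofReal_ne_zero.mpr Real.pi_ne_zero
  have key : Complex.Gamma (z - 1/2) / Complex.Gamma z
      = -Complex.I * ((sh / ch / g : ℝ) : ℂ) * B := by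
    have hcast : ((sh / ch / g : ℝ) : ℂ) = (sh:ℂ) / (ch:ℂ) / (g:ℂ) := by push_cast; ring
    rw [hcast]
    exact ratio_calc hGz hG32 hG1z hchc hshc hπc hgc Complex.I_mul_I h1 h2 h3
  -- series for B
  have hB : B = ∑' n : ℕ, (cb n : ℂ) * (1 / ((n : ℂ) + 1 - z)) := beta_series t
  have hwre : ∀ n : ℕ, ((n : ℂ) + 1 - z).re = (n : ℝ) + 1 := by
    intro n
    simp [hz, Complex.mul_re]
  have habs : ∀ n : ℕ, ((n : ℝ) + 1) ≤ ‖(n : ℂ) + 1 - z‖ := by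
    intro n
    calc ((n : ℝ) + 1) = |((n : ℂ) + 1 - z).re| := by
          rw [hwre n, _root_.abs_of_nonneg (by positivity)]
      _ ≤ ‖(n : ℂ) + 1 - z‖ := Complex.abs_re_le_norm _
  have hnorm_le : ∀ n : ℕ, ‖(cb n : ℂ) * (1 / ((n : ℂ) + 1 - z))‖ ≤ cb n / ((n : ℝ) + 1) := by
    intro n
    have hcbn : ‖(cb n : ℂ)‖ = cb n := by
      rw [Complex.norm_real, Real.norm_eq_abs, _root_.abs_of_nonneg (cb_pos n).le]
    calc ‖(cb n : ℂ) * (1 / ((n : ℂ) + 1 - z))‖ = cb n * ‖(n : ℂ) + 1 - z‖⁻¹ := by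
          rw [norm_mul, one_div, norm_inv, hcbn]
      _ ≤ cb n * ((n : ℝ) + 1)⁻¹ := by
          apply mul_le_mul_of_nonneg_left _ (cb_pos n).le
          exact inv_anti₀ (by positivity) (habs n)
      _ = cb n / ((n : ℝ) + 1) := by rw [div_eq_mul_inv]
  have hsumC : Summable (fun n : ℕ => (cb n : ℂ) * (1 / ((n : ℂ) + 1 - z))) := by
    apply Summable.of_norm
    exact Summable.of_nonneg_of_le (fun n => norm_nonneg _) hnorm_le cb_div_summable
  -- imaginary part of each term
  have hden : ∀ n : ℕ, (0:ℝ) < ((n : ℝ) + 1)^2 + t^2 := fun n => by positivity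
  have him : ∀ n : ℕ, ((n : ℂ) + 1 - z).im = -t := by
    intro n
    simp [hz]
  have hnq : ∀ n : ℕ, Complex.normSq ((n : ℂ) + 1 - z) = ((n : ℝ) + 1)^2 + t^2 := by
    intro n
    rw [Complex.normSq_apply, hwre n, him n]
    ring
  have himterm : ∀ n : ℕ, ((cb n : ℂ) * (1 / ((n : ℂ) + 1 - z))).im
      = t * (cb n * (1 / (((n : ℝ) + 1)^2 + t^2))) := by
    intro n
    rw [one_div, Complex.mul_im, Complex.ofReal_re, Complex.ofReal_im, Complex.inv_im, him n, hnq n]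
    ring
  have hsumR : Summable (fun n : ℕ => cb n * (1 / (((n : ℝ) + 1)^2 + t^2))) := by
    apply Summable.of_nonneg_of_le
      (fun n => mul_nonneg (cb_pos n).le (by positivity)) _ cb_div_summable
    intro n
    have hle : ((n : ℝ) + 1) ≤ ((n : ℝ) + 1)^2 + t^2 := by
      nlinarith [sq_nonneg t, (Nat.cast_nonneg n : (0:ℝ) ≤ n)]
    calc cb n * (1 / (((n : ℝ) + 1)^2 + t^2)) ≤ cb n * (1 / ((n : ℝ) + 1)) := by
          apply mul_le_mul_of_nonneg_left _ (cb_pos n).le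
          exact one_div_le_one_div_of_le (by positivity) hle
      _ = cb n / ((n : ℝ) + 1) := by rw [mul_one_div]
  have himB : B.im = t * ∑' n : ℕ, cb n * (1 / (((n : ℝ) + 1)^2 + t^2)) := by
    rw [hB, Complex.im_tsum hsumC, tsum_congr himterm, tsum_mul_left]
  have hP : 0 < ∑' n : ℕ, cb n * (1 / (((n : ℝ) + 1)^2 + t^2)) := by
    apply Summable.tsum_pos hsumR (fun n => mul_nonneg (cb_pos n).le (by positivity)) 0
    have := hden 0
    have := cb_pos 0
    positivity
  -- sign of sinh * t
  have hsht : 0 < sh * t := by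
    rcases lt_or_gt_of_ne ht with h | h
    · have : sh < 0 := by
        rw [hshdef]
        have hπt : π * t < 0 := mul_neg_of_pos_of_neg Real.pi_pos h
        have := Real.sinh_lt_sinh.mpr hπt
        simpa using this
      exact mul_pos_of_neg_of_neg this h
    · have : 0 < sh := by
        rw [hshdef]
        have hπt : 0 < π * t := mul_pos Real.pi_pos h
        have := Real.sinh_lt_sinh.mpr hπt
        simpa using this
      exact mul_pos this h
  -- conclude
  rw [key]
  have hre : (-Complex.I * ((sh / ch / g : ℝ) : ℂ) * B).re = sh / ch / g * B.im := by
    simp [Complex.mul_re, Complex.mul_im]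
  rw [hre, himB]
  have hrw : sh / ch / g * (t * (∑' n : ℕ, cb n * (1 / (((n : ℝ) + 1)^2 + t^2))))
      = (sh * t) * (∑' n : ℕ, cb n * (1 / (((n : ℝ) + 1)^2 + t^2))) * (ch * g)⁻¹ := by
    field_simp
  rw [hrw]
  exact mul_pos (mul_pos hsht hP) (inv_pos.mpr (mul_pos hchpos hgpos))
end
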